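/- Let ν ∈ (0,1), let ι be a finite index set with |ι| ≥ 2, and let m : ι → ℝ. Let x₁ be an index maximizing m over ι and x₂ an index maximizing m over ι \ {x₁}. Then ξ(x₂;m) ≥ ξ(x₁;m): the second-best index achieves at least the ξ-value of the best index. -/

import Mathlib

open Real MeasureTheory Finset

set_option linter.unusedSectionVars false

noncomputable section

variable {ι : Type*} [Fintype ι] [DecidableEq ι]

/-- The log-likelihood update function `J(y) = (1-ν)y + ln ν`. -/
def Jfun (ν y : ℝ) : ℝ := (1 - ν) * y + Real.log ν

/-- `h(ν) = exp(ν ln ν/(1-ν)) - exp(ln ν/(1-ν))`. -/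
def hfun (ν : ℝ) : ℝ :=
  Real.exp (ν * Real.log ν / (1 - ν)) - Real.exp (Real.log ν / (1 - ν))

/-- `g(ν) = exp(ln ν/(1-ν)) (1/(ν+1) - ln ν/(1-ν))`. -/
def gfun (ν : ℝ) : ℝ :=
  Real.exp (Real.log ν / (1 - ν)) * (1 / (ν + 1) - Real.log ν / (1 - ν))

/-- Kronecker delta `δ[a,x]` as a real number. -/
def kdelta (a x : ι) : ℝ := if x = a then 1 else 0

theorem univ_nonempty_of_card (hcard : 2 ≤ Fintype.card ι) :
    (Finset.univ : Finset ι).Nonempty := by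
  rw [← Finset.card_pos]
  have : (Finset.univ : Finset ι).card = Fintype.card ι := rfl
  omega

theorem erase_nonempty_of_card (hcard : 2 ≤ Fintype.card ι) (a : ι) :
    ((Finset.univ : Finset ι).erase a).Nonempty := by
  rw [← Finset.card_pos, Finset.card_erase_of_mem (Finset.mem_univ a)]
  have : (Finset.univ : Finset ι).card = Fintype.card ι := rfl
  omega

theorem pairs_nonempty_of_card (hcard : 2 ≤ Fintype.card ι) :
    ((Finset.univ : Finset (ι × ι)).filter fun p => p.1 ≠ p.2).Nonempty := by
  obtain ⟨a, b, hab⟩ := Fintype.exists_pair_of_one_lt_card (α := ι) (by omega)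
  exact ⟨(a, b), by simp [hab]⟩

/-- `max_{â ≠ a} m[â]`. -/
def maxOther (hcard : 2 ≤ Fintype.card ι) (m : ι → ℝ) (a : ι) : ℝ :=
  ((Finset.univ : Finset ι).erase a).sup' (erase_nonempty_of_card hcard a) m

/-- `ξ(a; m)`. -/
def xi (ν : ℝ) (hcard : 2 ≤ Fintype.card ι) (m : ι → ℝ) (a : ι) : ℝ :=
  if maxOther hcard m a - m a < Real.log ν then Real.exp (m a)
  else Real.exp (maxOther hcard m a)
    + hfun ν * Real.exp ((m a - ν * maxOther hcard m a) / (1 - ν))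

/-- `min_{x_i ≠ x_j} (m[x_i] - ν m[x_j])`, over ordered pairs of distinct indices. -/
def minPair (ν : ℝ) (hcard : 2 ≤ Fintype.card ι) (m : ι → ℝ) : ℝ :=
  (((Finset.univ : Finset (ι × ι)).filter fun p => p.1 ≠ p.2).inf'
    (pairs_nonempty_of_card hcard)) (fun p => m p.1 - ν * m p.2)

/-- The feedback density `f(y | m, a) = b[a] ν e^{-νy} + (1-b[a]) e^{-y}`. -/
def fdens (ν : ℝ) (m : ι → ℝ) (a : ι) (y : ℝ) : ℝ :=
  (Real.exp (m a) / ∑ l, Real.exp (m l)) * (ν * Real.exp (-ν * y))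
    + (1 - Real.exp (m a) / ∑ l, Real.exp (m l)) * Real.exp (-y)

/-- Terminal value `V_L(m) = max_x exp(m[x]) / ∑_l exp(m[l])`. -/
def Vterm (hcard : 2 ≤ Fintype.card ι) (m : ι → ℝ) : ℝ :=
  ((Finset.univ : Finset ι).sup' (univ_nonempty_of_card hcard) fun x => Real.exp (m x))
    / ∑ l, Real.exp (m l)


lemma hfun_pos {ν : ℝ} (h0 : 0 < ν) (h1 : ν < 1) : 0 < hfun ν := by
  have hlog : Real.log ν < 0 := Real.log_neg h0 h1
  have h1ν : 0 < 1 - ν := by linarith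
  have h : Real.log ν / (1 - ν) < ν * Real.log ν / (1 - ν) := by
    rw [div_lt_div_iff₀ h1ν h1ν]
    nlinarith [mul_pos (mul_pos h1ν h1ν) (neg_pos.mpr hlog)]
  have := Real.exp_lt_exp.mpr h
  unfold hfun; linarith

lemma key_ineq {ν : ℝ} (h0 : 0 < ν) (h1 : ν < 1) {d : ℝ} (hd0 : 0 ≤ d)
    (hd1 : d ≤ -Real.log ν) :
    hfun ν * (Real.exp (d / (1 - ν)) - Real.exp (-(ν * d) / (1 - ν))) ≤ Real.exp d - 1 := by
  have h1ν : 0 < 1 - ν := by linarith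
  have hlog : Real.log ν < 0 := Real.log_neg h0 h1
  set p : ℝ := 1 / (1 - ν) with hp
  set q : ℝ := -ν / (1 - ν) with hq
  set h : ℝ := hfun ν with hh
  have hpos : 0 < h := hfun_pos h0 h1
  have hqp : q ≤ p := by
    rw [hp, hq, div_le_div_iff₀ h1ν h1ν]; nlinarith
  set f : ℝ → ℝ := fun r => r - 1 - h * (r ^ p - r ^ q) with hf
  set f' : ℝ → ℝ := fun r => 1 - h * (p * r ^ (p - 1) - q * r ^ (q - 1)) with hf'
  set f'' : ℝ → ℝ := fun r =>
    -(h * (p * (p - 1) * r ^ (p - 2) - q * (q - 1) * r ^ (q - 2))) with hf''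
  have hD1 : ∀ x : ℝ, x ≠ 0 → HasDerivAt f (f' x) x := by
    intro x hx
    have h1 := Real.hasDerivAt_rpow_const (x := x) (p := p) (Or.inl hx)
    have h2 := Real.hasDerivAt_rpow_const (x := x) (p := q) (Or.inl hx)
    have h3 := ((hasDerivAt_id x).sub_const 1).sub ((h1.sub h2).const_mul h)
    exact h3
  have hD2 : ∀ x : ℝ, x ≠ 0 → HasDerivAt f' (f'' x) x := by
    intro x hx
    have h1 := Real.hasDerivAt_rpow_const (x := x) (p := p - 1) (Or.inl hx)
    have h2 := Real.hasDerivAt_rpow_const (x := x) (p := q - 1) (Or.inl hx)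
    have h3 := (hasDerivAt_const x (1:ℝ)).sub
      (((h1.const_mul p).sub (h2.const_mul q)).const_mul h)
    refine h3.congr_deriv ?_ <;> simp only [hf''] <;>
      · have e1 : p - 1 - 1 = p - 2 := by ring
        have e2 : q - 1 - 1 = q - 2 := by ring
        rw [e1, e2]; ring
  have hinv : (1:ℝ) < ν⁻¹ := (one_lt_inv₀ h0).mpr h1
  have hconc : ConcaveOn ℝ (Set.Icc (1:ℝ) ν⁻¹) f := by
    apply concaveOn_of_hasDerivWithinAt2_nonpos (f' := f') (f'' := f'')
      (convex_Icc _ _)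
    · intro x hx
      exact ((hD1 x (by rw [Set.mem_Icc] at hx; nlinarith [hx.1])).continuousAt).continuousWithinAt
    · intro x hx
      rw [interior_Icc] at hx
      exact (hD1 x (by nlinarith [hx.1])).hasDerivWithinAt
    · intro x hx
      rw [interior_Icc] at hx
      exact (hD2 x (by nlinarith [hx.1])).hasDerivWithinAt
    · intro x hx
      rw [interior_Icc] at hx
      have hx1 : (1:ℝ) ≤ x := le_of_lt hx.1
      have hqq : q * (q - 1) = p * (p - 1) := by
        rw [hp, hq]; field_simp; try ring
      have hmono : x ^ (q - 2) ≤ x ^ (p - 2) :=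
        Real.rpow_le_rpow_of_exponent_le hx1 (by linarith)
      have hKpos : 0 < p * (p - 1) := by
        have e : p * (p - 1) = ν / ((1 - ν) * (1 - ν)) := by
          rw [hp]; field_simp; try ring
        rw [e]; positivity
      simp only [hf'']
      rw [hqq]
      nlinarith [mul_nonneg (mul_nonneg hpos.le hKpos.le) (sub_nonneg.mpr hmono)]
  -- endpoint values
  have hf1 : f 1 = 0 := by simp [hf]
  set A : ℝ := ν * Real.log ν / (1 - ν) with hA
  set B : ℝ := Real.log ν / (1 - ν) with hB
  have hBA : B ≤ A := by
    rw [hA, hB, div_le_div_iff₀ h1ν h1ν]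
    nlinarith [mul_nonneg (mul_nonneg h1ν.le h1ν.le) (neg_pos.mpr hlog).le]
  have hinv_rpow_p : (ν⁻¹ : ℝ) ^ p = Real.exp (-B) := by
    rw [Real.rpow_def_of_pos (by positivity), Real.log_inv]
    congr 1; rw [hB, hp]; ring
  have hinv_rpow_q : (ν⁻¹ : ℝ) ^ q = Real.exp A := by
    rw [Real.rpow_def_of_pos (by positivity)]
    rw [Real.log_inv]
    congr 1; rw [hA, hq]; field_simp; try ring
  have hAB : Real.exp A * Real.exp (-B) = ν⁻¹ := by
    rw [← Real.exp_add]
    have : A + -B = -Real.log ν := by rw [hA, hB]; field_simp; ring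
    rw [this, Real.exp_neg, Real.exp_log h0]
  have hBB : Real.exp B * Real.exp (-B) = 1 := by
    rw [← Real.exp_add]; simp
  have hExpAB : Real.exp A * Real.exp B ≤ Real.exp A * Real.exp A := by
    have := Real.exp_le_exp.mpr hBA
    nlinarith [Real.exp_pos A]
  have hfν : 0 ≤ f ν⁻¹ := by
    simp only [hf]
    rw [hinv_rpow_p, hinv_rpow_q]
    have hhe : h = Real.exp A - Real.exp B := rfl
    rw [hhe]
    nlinarith [Real.exp_pos A, Real.exp_pos B]
  -- apply concavity
  have hmem : Real.exp d ∈ Set.Icc (1:ℝ) ν⁻¹ := by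
    constructor
    · exact Real.one_le_exp hd0
    · calc Real.exp d ≤ Real.exp (-Real.log ν) := Real.exp_le_exp.mpr hd1
        _ = ν⁻¹ := by rw [Real.exp_neg, Real.exp_log h0]
    
  have hseg := hconc.ge_on_segment (Set.left_mem_Icc.mpr (le_of_lt hinv))
    (Set.right_mem_Icc.mpr (le_of_lt hinv))
    (by rwa [segment_eq_Icc (le_of_lt hinv)])
  have h0f : 0 ≤ f (Real.exp d) := le_trans (le_min (le_of_eq hf1.symm) hfν) hseg
  -- convert back
  have e1 : (Real.exp d) ^ p = Real.exp (d / (1 - ν)) := by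
    rw [Real.rpow_def_of_pos (Real.exp_pos d), Real.log_exp]
    congr 1; rw [hp]; ring
  have e2 : (Real.exp d) ^ q = Real.exp (-(ν * d) / (1 - ν)) := by
    rw [Real.rpow_def_of_pos (Real.exp_pos d), Real.log_exp]
    congr 1; rw [hq]; ring
  simp only [hf] at h0f
  rw [e1, e2] at h0f
  linarith


theorem xi_aux_main {ν : ℝ} (h0 : 0 < ν) (h1 : ν < 1) (M N : ℝ) (hMN : N ≤ M)
    (hlog : Real.log ν ≤ N - M) :
    Real.exp N + hfun ν * Real.exp ((M - ν * N) / (1 - ν)) ≤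
      Real.exp M + hfun ν * Real.exp ((N - ν * M) / (1 - ν)) := by
  have h1ν : 0 < 1 - ν := by linarith
  set d : ℝ := M - N with hd
  have hd0 : 0 ≤ d := by linarith
  have hd1 : d ≤ -Real.log ν := by linarith
  have hkey := key_ineq h0 h1 hd0 hd1
  have e1 : Real.exp ((M - ν * N) / (1 - ν)) = Real.exp N * Real.exp (d / (1 - ν)) := by
    rw [← Real.exp_add]; congr 1; field_simp; ring
  have e2 : Real.exp ((N - ν * M) / (1 - ν)) = Real.exp N * Real.exp (-(ν * d) / (1 - ν)) := by
    rw [← Real.exp_add]; congr 1; field_simp; ring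
  have e3 : Real.exp M = Real.exp N * Real.exp d := by
    rw [← Real.exp_add]; congr 1; ring
  rw [e1, e2, e3]
  nlinarith [mul_le_mul_of_nonneg_left hkey (Real.exp_nonneg N), Real.exp_pos N]

/-- `ξ(x₂;m) ≥ ξ(x₁;m)`. -/
theorem xi_first_le_xi_second
    (ν : ℝ) (hν : ν ∈ Set.Ioo (0:ℝ) 1)
    (hcard : 2 ≤ Fintype.card ι) (m : ι → ℝ)
    (x₁ x₂ : ι) (hx₁ : ∀ x, m x ≤ m x₁) (hne : x₂ ≠ x₁)
    (hx₂ : ∀ x, x ≠ x₁ → m x ≤ m x₂) :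
    xi ν hcard m x₁ ≤ xi ν hcard m x₂ := by
  obtain ⟨h0, h1⟩ := hν
  have hlog : Real.log ν < 0 := Real.log_neg h0 h1
  have h21 : m x₂ ≤ m x₁ := hx₁ x₂
  have hmax1 : maxOther hcard m x₁ = m x₂ := by
    apply le_antisymm
    · exact Finset.sup'_le _ _ fun x hx => hx₂ x (Finset.ne_of_mem_erase hx)
    · exact Finset.le_sup' m (Finset.mem_erase.mpr ⟨hne, Finset.mem_univ _⟩)
  have hmax2 : maxOther hcard m x₂ = m x₁ := by
    apply le_antisymm
    · exact Finset.sup'_le _ _ fun x _ => hx₁ x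
    · exact Finset.le_sup' m (Finset.mem_erase.mpr ⟨hne.symm, Finset.mem_univ _⟩)
  have hx2val : xi ν hcard m x₂ =
      Real.exp (m x₁) + hfun ν * Real.exp ((m x₂ - ν * m x₁) / (1 - ν)) := by
    rw [xi, hmax2, if_neg (by linarith)]
  rw [hx2val, xi, hmax1]
  by_cases hc : m x₂ - m x₁ < Real.log ν
  · rw [if_pos hc]
    have := mul_pos (hfun_pos h0 h1) (Real.exp_pos ((m x₂ - ν * m x₁) / (1 - ν)))
    linarith
  · rw [if_neg hc]
    exact xi_aux_main h0 h1 (m x₁) (m x₂) h21 (by linarith)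


end
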